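/- arXiv:1505.03422 — 2 statements merged into one kernel-verified Lean document; each statement's English description precedes it below -/
import Mathlib

section
/- Let p ≥ 1, let t₀ < t_f be real numbers, let t̃₁, …, t̃_p ∈ [t₀, t_f] be quadrature nodes with weights w₁, …, w_p ∈ ℝ such that ∑ₖ wₖ q(t̃ₖ) = ∫_{t₀}^{t_f} q(t) dt for every real polynomial q of degree ≤ 2p − 1. Let n ≥ 1, let C be a symmetric n × n real matrix, and let h : ℝⁿ → ℝⁿ satisfy vᵀ C h(v) = 0 for all v ∈ ℝⁿ. Let y_h : ℝ → ℝⁿ be a map each of whose components is a polynomial of degree ≤ p, and suppose the collocation conditions y_h'(t̃ₖ) = h(y_h(t̃ₖ)) hold for k = 1, …, p. Then y_h(t_f)ᵀ C y_h(t_f) = y_h(t₀)ᵀ C y_h(t₀); that is, the mimetic canonical integrator exactly conserves quadratic first integrals. -/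
/-- The mimetic canonical integrator exactly conserves quadratic first
integrals: if the polynomial approximation `y_h` (componentwise of degree ≤ p)
satisfies the collocation conditions `y_h'(t̃ₖ) = h(y_h(t̃ₖ))` at `p` quadrature
nodes whose rule is exact for polynomials of degree ≤ 2p − 1, and
`vᵀ C h(v) = 0` for all `v` with `C` symmetric, then
`y_h(t_f)ᵀ C y_h(t_f) = y_h(t₀)ᵀ C y_h(t₀)`. -/
theorem mimetic_canonical_integrator_conserves_quadratic_invariants
    (p : ℕ) (hp : 1 ≤ p) (t₀ tf : ℝ) (ht : t₀ < tf)
    (tn : Fin p → ℝ) (htn : ∀ k, tn k ∈ Set.Icc t₀ tf)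
    (w : Fin p → ℝ)
    (hquad : ∀ q : Polynomial ℝ, q.natDegree ≤ 2 * p - 1 →
      ∑ k : Fin p, w k * q.eval (tn k) = ∫ t in t₀..tf, q.eval t)
    (n : ℕ) (hn : 1 ≤ n) (C : Matrix (Fin n) (Fin n) ℝ) (hC : C.IsSymm)
    (h : (Fin n → ℝ) → (Fin n → ℝ))
    (horth : ∀ v : Fin n → ℝ, dotProduct v (C.mulVec (h v)) = 0)
    (yh : ℝ → Fin n → ℝ)
    (P : Fin n → Polynomial ℝ) (hdeg : ∀ i, (P i).natDegree ≤ p)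
    (hrep : ∀ t : ℝ, ∀ i : Fin n, yh t i = (P i).eval t)
    (hcolloc : ∀ k : Fin p, HasDerivAt yh (h (yh (tn k))) (tn k)) :
    dotProduct (yh tf) (C.mulVec (yh tf)) =
      dotProduct (yh t₀) (C.mulVec (yh t₀)) := by
  classical
  set Q : Polynomial ℝ :=
    ∑ i : Fin n, ∑ j : Fin n, Polynomial.C (C i j) * (P i * P j) with hQ
  -- Fact A : Q.eval t = yh t ⬝ C.mulVec (yh t)
  have hA : ∀ t : ℝ, Q.eval t = dotProduct (yh t) (C.mulVec (yh t)) := by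
    intro t
    simp only [hQ, Polynomial.eval_finset_sum, Polynomial.eval_mul, Polynomial.eval_C,
      dotProduct, Matrix.mulVec, Finset.mul_sum, hrep]
    apply Finset.sum_congr rfl; intro i _
    apply Finset.sum_congr rfl; intro j _
    ring
  -- degree bound
  have hQdeg : Q.natDegree ≤ 2 * p := by
    apply Polynomial.natDegree_sum_le_of_forall_le
    intro i _
    apply Polynomial.natDegree_sum_le_of_forall_le
    intro j _
    calc (Polynomial.C (C i j) * (P i * P j)).natDegree
        ≤ (Polynomial.C (C i j)).natDegree + (P i * P j).natDegree :=
          Polynomial.natDegree_mul_le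
      _ ≤ 0 + ((P i).natDegree + (P j).natDegree) := by
          exact add_le_add (le_of_eq (Polynomial.natDegree_C _)) Polynomial.natDegree_mul_le
      _ ≤ 0 + (p + p) := by
          exact add_le_add le_rfl (add_le_add (hdeg i) (hdeg j))
      _ = 2 * p := by ring
  have hQ'deg : (Polynomial.derivative Q).natDegree ≤ 2 * p - 1 := by
    calc (Polynomial.derivative Q).natDegree ≤ Q.natDegree - 1 :=
          Polynomial.natDegree_derivative_le Q
      _ ≤ 2 * p - 1 := Nat.sub_le_sub_right hQdeg 1
  -- derivative vanishes at nodes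
  have hzero : ∀ k : Fin p, (Polynomial.derivative Q).eval (tn k) = 0 := by
    intro k
    set v := yh (tn k) with hv
    -- derivative of each component
    have hcomp : ∀ i : Fin n, HasDerivAt (fun t => yh t i) (h v i) (tn k) := by
      intro i
      exact (hasDerivAt_pi.mp (hcolloc k)) i
    have hg : HasDerivAt (fun t => dotProduct (yh t) (C.mulVec (yh t)))
        (∑ i : Fin n, ∑ j : Fin n, C i j * (h v i * v j + v i * h v j)) (tn k) := by
      have : HasDerivAt (fun t => ∑ i : Fin n, ∑ j : Fin n, C i j * (yh t i * yh t j))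
          (∑ i : Fin n, ∑ j : Fin n, C i j * (h v i * v j + v i * h v j)) (tn k) := by
        apply HasDerivAt.fun_sum; intro i _
        apply HasDerivAt.fun_sum; intro j _
        exact ((hcomp i).mul (hcomp j)).const_mul (C i j)
      convert this using 1
      funext t
      simp only [dotProduct, Matrix.mulVec, Finset.mul_sum]
      apply Finset.sum_congr rfl; intro i _
      apply Finset.sum_congr rfl; intro j _
      ring
    -- the derivative value is zero
    have hval : (∑ i : Fin n, ∑ j : Fin n, C i j * (h v i * v j + v i * h v j)) = 0 := by
      have h1 : (∑ i : Fin n, ∑ j : Fin n, C i j * (v i * h v j))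
          = dotProduct v (C.mulVec (h v)) := by
        simp only [dotProduct, Matrix.mulVec, Finset.mul_sum]
        apply Finset.sum_congr rfl; intro i _
        apply Finset.sum_congr rfl; intro j _; ring
      have h2 : (∑ i : Fin n, ∑ j : Fin n, C i j * (h v i * v j))
          = dotProduct v (C.mulVec (h v)) := by
        rw [Finset.sum_comm]
        simp only [dotProduct, Matrix.mulVec, Finset.mul_sum]
        apply Finset.sum_congr rfl; intro j _
        apply Finset.sum_congr rfl; intro i _
        have hsym : C i j = C j i := by
          have := hC; rw [Matrix.IsSymm] at this
          have := congrFun (congrFun this j) i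
          simpa [Matrix.transpose_apply] using this
        rw [hsym]; ring
      calc (∑ i : Fin n, ∑ j : Fin n, C i j * (h v i * v j + v i * h v j))
          = (∑ i : Fin n, ∑ j : Fin n, C i j * (h v i * v j))
            + (∑ i : Fin n, ∑ j : Fin n, C i j * (v i * h v j)) := by
            rw [← Finset.sum_add_distrib]
            apply Finset.sum_congr rfl; intro i _
            rw [← Finset.sum_add_distrib]
            apply Finset.sum_congr rfl; intro j _; ring
        _ = 0 := by rw [h1, h2, horth v]; ring
    have hgpoly : HasDerivAt (fun t => dotProduct (yh t) (C.mulVec (yh t)))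
        ((Polynomial.derivative Q).eval (tn k)) (tn k) := by
      have := Q.hasDerivAt (tn k)
      have heq : (fun t => Q.eval t) = (fun t => dotProduct (yh t) (C.mulVec (yh t))) := by
        funext t; exact hA t
      rw [heq] at this
      exact this
    rw [← hval]
    exact hgpoly.unique hg
  -- fundamental theorem of calculus
  have hftc : (∫ t in t₀..tf, (Polynomial.derivative Q).eval t) = Q.eval tf - Q.eval t₀ := by
    apply intervalIntegral.integral_eq_sub_of_hasDerivAt
    · intro t _
      exact Q.hasDerivAt t
    · exact (Polynomial.continuous _).intervalIntegrable _ _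
  have hsum : ∑ k : Fin p, w k * (Polynomial.derivative Q).eval (tn k) = 0 := by
    apply Finset.sum_eq_zero; intro k _
    rw [hzero k, mul_zero]
  have := hquad (Polynomial.derivative Q) hQ'deg
  rw [hsum, hftc] at this
  have hfin : Q.eval tf = Q.eval t₀ := by linarith
  rw [← hA, ← hA, hfin]
end

section
/- Let p ≥ 1, m ≥ 1, let t₀ < t_f, let t̃₁ < ⋯ < t̃_p be distinct points of [t₀, t_f] with nonzero real weights w₁, …, w_p, and let l̃₁, …, l̃_p be the Lagrange basis polynomials of degree p − 1 at these nodes (l̃ⱼ(t̃ᵢ) = δᵢⱼ). Let J = [[0, I_m], [−I_m, 0]] be the standard 2m × 2m symplectic matrix and let H : ℝ^{2m} → ℝ be continuously differentiable with gradient ∇H. Let y_h : ℝ → ℝ^{2m} be a map each of whose components is a polynomial of degree ≤ p, and suppose that for each j = 1, …, p the Galerkin condition wⱼ · y_h'(t̃ⱼ) = ∫_{t₀}^{t_f} l̃ⱼ(t) · J⁻¹ ∇H(y_h(t)) dt holds (an identity of vectors in ℝ^{2m}). Then H(y_h(t_f)) = H(y_h(t₀)); that is, the mimetic Galerkin integrator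 exactly preserves the energy of the Hamiltonian system. -/
open Matrix intervalIntegral InnerProductSpace

lemma mgip_J_aux (m : ℕ) (hm : 1 ≤ m) (J : Matrix (Fin (2 * m)) (Fin (2 * m)) ℝ)
    (hJ : ∀ i j : Fin (2 * m),
      J i j = if (i : ℕ) + m = (j : ℕ) then 1
        else if (j : ℕ) + m = (i : ℕ) then -1 else 0) :
    ∀ v : Fin (2 * m) → ℝ, v ⬝ᵥ (J⁻¹ *ᵥ v) = 0 := by
  have hJJ : J * J = -1 := by
    ext i k
    rw [Matrix.mul_apply, Matrix.neg_apply, Matrix.one_apply]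
    by_cases hi : (i : ℕ) < m
    · have hlt : (i : ℕ) + m < 2 * m := by omega
      set j₀ : Fin (2 * m) := ⟨(i : ℕ) + m, hlt⟩ with hj₀
      rw [Finset.sum_eq_single j₀]
      · have h1 : J i j₀ = 1 := by rw [hJ]; simp [hj₀]
        have h2 : J j₀ k = if i = k then -1 else 0 := by
          rw [hJ]
          rcases eq_or_ne i k with h | h
          · subst h; simp [hj₀]; omega
          · have : ¬((k : ℕ) + m = (j₀ : ℕ)) := by
              simp only [hj₀]
              intro hc
              exact h (Fin.ext (by omega))
            simp only [hj₀] at this ⊢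
            rw [if_neg (by omega), if_neg this, if_neg h]
        rw [h1, h2]; split_ifs <;> norm_num
      · intro b _ hb
        have hb1 : ¬((i : ℕ) + m = (b : ℕ)) := fun hc => hb (Fin.ext (by simp [hj₀, ← hc]))
        have hb2 : ¬((b : ℕ) + m = (i : ℕ)) := by omega
        rw [hJ, if_neg hb1, if_neg hb2, zero_mul]
      · simp
    · have hlt : (i : ℕ) - m < 2 * m := by omega
      set j₀ : Fin (2 * m) := ⟨(i : ℕ) - m, hlt⟩ with hj₀
      rw [Finset.sum_eq_single j₀]
      · have h1 : J i j₀ = -1 := by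
          rw [hJ]; simp only [hj₀]
          rw [if_neg (by omega), if_pos (by omega)]
        have h2 : J j₀ k = if i = k then 1 else 0 := by
          rw [hJ]
          rcases eq_or_ne i k with h | h
          · subst h; simp only [hj₀]; rw [if_pos (by omega)]; simp
          · have : ¬((j₀ : ℕ) + m = (k : ℕ)) := by
              simp only [hj₀]
              intro hc
              exact h (Fin.ext (by omega))
            simp only [hj₀] at this ⊢
            rw [if_neg this, if_neg (by omega), if_neg h]
        rw [h1, h2]; split_ifs <;> norm_num
      · intro b _ hb
        have hb1 : ¬((i : ℕ) + m = (b : ℕ)) := by omega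
        have hb2 : ¬((b : ℕ) + m = (i : ℕ)) := fun hc => hb (Fin.ext (by simp [hj₀]; omega))
        rw [hJ, if_neg hb1, if_neg hb2, zero_mul]
      · simp
  have hinv : J⁻¹ = -J := by
    apply Matrix.inv_eq_right_inv
    rw [Matrix.mul_neg, hJJ]; simp
  have hskew : ∀ v : Fin (2 * m) → ℝ, v ⬝ᵥ (J *ᵥ v) = 0 := by
    intro v
    have hT : Jᵀ = -J := by
      ext i j
      rw [Matrix.transpose_apply, Matrix.neg_apply, hJ, hJ]
      split_ifs <;> first | omega | norm_num
    have h1 : v ⬝ᵥ (J *ᵥ v) = (Jᵀ *ᵥ v) ⬝ᵥ v := by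
      rw [Matrix.dotProduct_mulVec, Matrix.mulVec_transpose]
    rw [hT] at h1
    have h2 : ((-J) *ᵥ v) ⬝ᵥ v = -(v ⬝ᵥ (J *ᵥ v)) := by
      rw [Matrix.neg_mulVec, neg_dotProduct, dotProduct_comm]
    rw [h2] at h1
    linarith
  intro v
  rw [hinv, Matrix.neg_mulVec, dotProduct_neg, hskew, neg_zero]

/-- The mimetic Galerkin integrator exactly preserves the energy of a
Hamiltonian system: if the polynomial approximation `y_h` (componentwise of
degree ≤ p) satisfies, for each Lagrange basis polynomial `l̃ⱼ` of degree
p − 1 at the Gauss nodes `t̃ⱼ` with weights `wⱼ`, the Galerkin condition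
`wⱼ y_h'(t̃ⱼ) = ∫_{t₀}^{t_f} l̃ⱼ(t) J⁻¹ ∇H(y_h(t)) dt`, then
`H(y_h(t_f)) = H(y_h(t₀))`. -/
theorem mimetic_galerkin_integrator_preserves_energy
    (p m : ℕ) (hp : 1 ≤ p) (hm : 1 ≤ m)
    (t₀ tf : ℝ) (ht : t₀ < tf)
    (tn : Fin p → ℝ) (htn : ∀ k, tn k ∈ Set.Icc t₀ tf) (hmono : StrictMono tn)
    (w : Fin p → ℝ) (hw : ∀ k, w k ≠ 0)
    (L : Fin p → Polynomial ℝ) (hLdeg : ∀ j, (L j).natDegree ≤ p - 1)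
    (hLdelta : ∀ i j : Fin p, (L j).eval (tn i) = if i = j then 1 else 0)
    (J : Matrix (Fin (2 * m)) (Fin (2 * m)) ℝ)
    (hJ : ∀ i j : Fin (2 * m),
      J i j = if (i : ℕ) + m = (j : ℕ) then 1
        else if (j : ℕ) + m = (i : ℕ) then -1 else 0)
    (H : EuclideanSpace ℝ (Fin (2 * m)) → ℝ) (hH : ContDiff ℝ 1 H)
    (yh : ℝ → EuclideanSpace ℝ (Fin (2 * m)))
    (P : Fin (2 * m) → Polynomial ℝ) (hdeg : ∀ i, (P i).natDegree ≤ p)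
    (hrep : ∀ t : ℝ, ∀ i : Fin (2 * m), yh t i = (P i).eval t)
    (yh' : ℝ → EuclideanSpace ℝ (Fin (2 * m)))
    (hyh' : ∀ t : ℝ, HasDerivAt yh (yh' t) t)
    (hgal : ∀ j : Fin p,
      w j • yh' (tn j) =
        ∫ t in t₀..tf, (L j).eval t •
          ((WithLp.equiv 2 (Fin (2 * m) → ℝ)).symm
            (J⁻¹.mulVec ((WithLp.equiv 2 (Fin (2 * m) → ℝ)) (gradient H (yh t)))))) :
    H (yh tf) = H (yh t₀) := by
  classical
  set F : ℝ → EuclideanSpace ℝ (Fin (2 * m)) := fun t => gradient H (yh t) with hF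
  -- continuity of yh
  have hyhc : Continuous yh := by
    rw [continuous_iff_continuousAt]; exact fun t => (hyh' t).continuousAt
  have hFc : Continuous F := by
    have h1 : Continuous (fderiv ℝ H) := hH.continuous_fderiv one_ne_zero
    have h2 : Continuous (gradient H) := by
      show Continuous fun x => (toDual ℝ (EuclideanSpace ℝ (Fin (2 * m)))).symm (fderiv ℝ H x)
      exact (toDual ℝ (EuclideanSpace ℝ (Fin (2 * m)))).symm.continuous.comp h1
    exact h2.comp hyhc
  -- components of yh' are evaluations of derivative polynomials
  have hcomp : ∀ (i : Fin (2 * m)) (t : ℝ), yh' t i = ((P i).derivative).eval t := by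
    intro i t
    have h1 : HasDerivAt (fun s => yh s i) (yh' t i) t := by
      have := (EuclideanSpace.proj (𝕜 := ℝ) i).hasFDerivAt.comp_hasDerivAt t (hyh' t)
      simpa [Function.comp_def] using this
    have h2 : HasDerivAt (fun s => (P i).eval s) (((P i).derivative).eval t) t :=
      (P i).hasDerivAt t
    have he : (fun s => yh s i) = fun s => (P i).eval s := funext fun s => hrep s i
    rw [he] at h1
    exact h1.unique h2
  -- Lagrange interpolation of the derivative polynomials
  have hpoly : ∀ i : Fin (2 * m),
      (P i).derivative = ∑ j, Polynomial.C (((P i).derivative).eval (tn j)) * L j := by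
    intro i
    have hz : (P i).derivative - ∑ j, Polynomial.C (((P i).derivative).eval (tn j)) * L j = 0 := by
      apply Polynomial.eq_zero_of_natDegree_lt_card_of_eval_eq_zero _ hmono.injective
      · intro k
        rw [Polynomial.eval_sub, Polynomial.eval_finset_sum]
        simp only [Polynomial.eval_mul, Polynomial.eval_C, hLdelta]
        simp
      · have hd : ((P i).derivative).natDegree ≤ p - 1 :=
          le_trans (Polynomial.natDegree_derivative_le _) (Nat.sub_le_sub_right (hdeg i) 1)
        have hs : (∑ j, Polynomial.C (((P i).derivative).eval (tn j)) * L j).natDegree ≤ p - 1 := by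
          apply Polynomial.natDegree_sum_le_of_forall_le
          intro j _
          exact le_trans (Polynomial.natDegree_C_mul_le _ _) (hLdeg j)
        calc ((P i).derivative - _).natDegree ≤ max _ _ := Polynomial.natDegree_sub_le _ _
          _ ≤ p - 1 := max_le hd hs
          _ < p := by omega
          _ = Fintype.card (Fin p) := (Fintype.card_fin p).symm
    exact sub_eq_zero.mp hz
  -- expansion of yh' in the Lagrange basis
  have hexp : ∀ t : ℝ, yh' t = ∑ j, (L j).eval t • yh' (tn j) := by
    intro t
    apply PiLp.ext
    intro i
    have happ : (∑ j, (L j).eval t • yh' (tn j)) i = ∑ j, (L j).eval t * yh' (tn j) i := by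
      change (EuclideanSpace.proj (𝕜 := ℝ) i) (∑ j, (L j).eval t • yh' (tn j)) = _
      rw [map_sum]
      simp
    rw [happ, hcomp i t, hpoly i, Polynomial.eval_finset_sum]
    apply Finset.sum_congr rfl
    intro j _
    rw [Polynomial.eval_mul, Polynomial.eval_C, hcomp i (tn j), mul_comm]
  -- derivative of the energy
  have hHd : ∀ t : ℝ, HasDerivAt (fun s => H (yh s))
      (∑ j, (L j).eval t * (inner ℝ (F t) (yh' (tn j)) : ℝ)) t := by
    intro t
    have h0 : HasGradientAt H (F t) (yh t) := (hH.differentiable one_ne_zero (yh t)).hasGradientAt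
    have h1 : HasDerivAt (fun s => H (yh s)) ((inner ℝ (F t) (yh' t) : ℝ)) t := by
      have := (hasGradientAt_iff_hasFDerivAt.mp h0).comp_hasDerivAt t (hyh' t)
      simpa [Function.comp_def, InnerProductSpace.toDual_apply_apply] using this
    have h2 : (inner ℝ (F t) (yh' t) : ℝ) = ∑ j, (L j).eval t * inner ℝ (F t) (yh' (tn j)) := by
      rw [hexp t, inner_sum]
      exact Finset.sum_congr rfl fun j _ => real_inner_smul_right _ _ _
    rwa [h2] at h1
  have hcont2 : Continuous fun t => ∑ j, (L j).eval t * (inner ℝ (F t) (yh' (tn j)) : ℝ) :=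
    continuous_finset_sum _ fun j _ => ((L j).continuous).mul (hFc.inner continuous_const)
  have hFTC : (∫ t in t₀..tf, ∑ j, (L j).eval t * (inner ℝ (F t) (yh' (tn j)) : ℝ))
      = H (yh tf) - H (yh t₀) :=
    intervalIntegral.integral_eq_sub_of_hasDerivAt (fun t _ => hHd t)
      (hcont2.intervalIntegrable _ _)
  have hintj : ∀ j : Fin p,
      IntervalIntegrable (fun t => (L j).eval t • F t) MeasureTheory.volume t₀ tf :=
    fun j => (((L j).continuous).smul hFc).intervalIntegrable _ _
  set G : Fin p → EuclideanSpace ℝ (Fin (2 * m)) :=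
    fun j => ∫ t in t₀..tf, (L j).eval t • F t with hG
  set A : EuclideanSpace ℝ (Fin (2 * m)) →L[ℝ] EuclideanSpace ℝ (Fin (2 * m)) :=
    LinearMap.toContinuousLinearMap (Matrix.toEuclideanLin J⁻¹) with hA
  have hAapp : ∀ v, A v =
      (WithLp.equiv 2 (Fin (2 * m) → ℝ)).symm (J⁻¹ *ᵥ (WithLp.equiv 2 (Fin (2 * m) → ℝ)) v) := by
    intro v; simp [hA, Matrix.toEuclideanLin_apply]
  have hgal' : ∀ j : Fin p, w j • yh' (tn j) = A (G j) := by
    intro j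
    rw [hgal j, hG, ← ContinuousLinearMap.intervalIntegral_comp_comm A (hintj j)]
    apply intervalIntegral.integral_congr
    intro t _
    simp [ContinuousLinearMap.map_smul, hAapp, hF, WithLp.ofLp_smul, WithLp.toLp_smul, Matrix.mulVec_smul]
  have hterm : ∀ j : Fin p, (inner ℝ (G j) (yh' (tn j)) : ℝ) = 0 := by
    intro j
    have h1 : yh' (tn j) = (w j)⁻¹ • A (G j) := by
      rw [← hgal' j, smul_smul, inv_mul_cancel₀ (hw j), one_smul]
    rw [h1, real_inner_smul_right]
    have h2 : (inner ℝ (G j) (A (G j)) : ℝ) =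
        (WithLp.equiv 2 (Fin (2 * m) → ℝ) (G j)) ⬝ᵥ
          (J⁻¹ *ᵥ WithLp.equiv 2 (Fin (2 * m) → ℝ) (G j)) := by
      rw [hAapp]
      simp [PiLp.inner_apply, RCLike.inner_apply, dotProduct]
      exact Finset.sum_congr rfl fun _ _ => mul_comm _ _
    rw [h2, mgip_J_aux m hm J hJ, mul_zero]
  have hzero : (∫ t in t₀..tf, ∑ j, (L j).eval t * (inner ℝ (F t) (yh' (tn j)) : ℝ)) = 0 := by
    rw [intervalIntegral.integral_finset_sum]
    · apply Finset.sum_eq_zero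
      intro j _
      have h4 : (∫ t in t₀..tf, (L j).eval t * (inner ℝ (F t) (yh' (tn j)) : ℝ))
          = inner ℝ (G j) (yh' (tn j)) := by
        have h3 : (fun t => (L j).eval t * (inner ℝ (F t) (yh' (tn j)) : ℝ))
            = fun t => (innerSL ℝ (yh' (tn j))) ((L j).eval t • F t) := by
          funext t
          rw [innerSL_apply_apply, real_inner_smul_right, real_inner_comm]
        rw [h3, ContinuousLinearMap.intervalIntegral_comp_comm _ (hintj j)]
        rw [innerSL_apply_apply, real_inner_comm, hG]
      rw [h4, hterm j]
    · intro j _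
      exact (((L j).continuous).mul (hFc.inner continuous_const)).intervalIntegrable _ _
  rw [hzero] at hFTC
  linarith
end
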